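/- arXiv:1803.05341 — 2 statements merged into one kernel-verified Lean document; each statement's English description precedes it below -/
import Mathlib

section
/- Let M > 0, a ∈ ℝ, p = r - i·a·x, Δ_r = r² - 2Mr + a², Σ = r² + a²x², and define the pairing ⟨f,g⟩ = (Δ_r/Σ)·(∂_r f)(∂_r g) + ((1-x²)/Σ)·(∂_x f)(∂_x g). Define the complex function 𝓘 = -M^{1/3}/p (with M^{1/3} the real cube root). Then the curvature invariant 𝕄 := -𝓘^{-4}·⟨𝓘,𝓘⟩ + 𝓘 + conj(𝓘) is constant: 𝕄 = -M^{-2/3} at every point (r,x) where p ≠ 0, Σ ≠ 0. -/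
open Complex

/-- The `(r,x)`-block gradient pairing of the inverse Kerr metric. -/
noncomputable def kerrPairing (a M : ℝ) (f g : ℝ → ℝ → ℂ) (r x : ℝ) : ℂ :=
  (((r ^ 2 - 2 * M * r + a ^ 2) / (r ^ 2 + a ^ 2 * x ^ 2) : ℝ) : ℂ) *
      deriv (fun s => f s x) r * deriv (fun s => g s x) r
  + (((1 - x ^ 2) / (r ^ 2 + a ^ 2 * x ^ 2) : ℝ) : ℂ) *
      deriv (fun s => f r s) x * deriv (fun s => g r s) x

/-- For `M > 0`, `p = r - iax`, `𝓘 = -M^{1/3}/p`, the curvature invariant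
`𝕄 = -𝓘⁻⁴⟨𝓘,𝓘⟩ + 𝓘 + conj 𝓘` is the constant `-M^{-2/3}` wherever
`p ≠ 0` and `Σ ≠ 0`. -/
theorem stmt_3 (a M r x : ℝ) (hM : 0 < M) (p I : ℝ → ℝ → ℂ)
    (hp : ∀ r x : ℝ, p r x = (r : ℂ) - Complex.I * a * x)
    (hI : ∀ r x : ℝ, I r x = -((M ^ ((1 : ℝ) / 3) : ℝ) : ℂ) / p r x)
    (hSig : r ^ 2 + a ^ 2 * x ^ 2 ≠ 0) (hpne : p r x ≠ 0) :
    -((I r x) ^ 4)⁻¹ * kerrPairing a M I I r x + I r x + (starRingEnd ℂ) (I r x)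
      = -((M ^ (-(2 : ℝ) / 3) : ℝ) : ℂ) := by
  obtain ⟨c, hc⟩ : ∃ c : ℝ, c = M ^ ((1 : ℝ) / 3) := ⟨_, rfl⟩
  rw [← hc] at hI
  have hc0 : 0 < c := hc ▸ Real.rpow_pos_of_pos hM _
  have hc3 : c ^ 3 = M := by
    rw [hc, ← Real.rpow_natCast (M ^ ((1:ℝ)/3)) 3, ← Real.rpow_mul hM.le]
    norm_num
  have hc3C : (c : ℂ) ^ 3 = (M : ℂ) := by exact_mod_cast hc3
  have hcexp : M ^ (-(2 : ℝ) / 3) = (c ^ 2)⁻¹ := by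
    rw [hc, ← Real.rpow_natCast (M ^ ((1:ℝ)/3)) 2, ← Real.rpow_mul hM.le,
      ← Real.rpow_neg hM.le]
    congr 1
    push_cast; ring
  have hPne : ((r : ℂ) - Complex.I * a * x) ≠ 0 := by rw [← hp]; exact hpne
  -- derivative in r
  have hdr : deriv (fun s => I s x) r = (c : ℂ) / ((r : ℂ) - Complex.I * a * x) ^ 2 := by
    have h1 : HasDerivAt (fun s : ℝ => ((s : ℂ) - Complex.I * a * x)) 1 r := by
      simpa using (Complex.ofRealCLM.hasDerivAt (x := r)).sub_const (Complex.I * a * x)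
    have h2 := HasDerivAt.div (hasDerivAt_const r (-(c:ℂ))) h1 (by exact hPne)
    have h3 : HasDerivAt (fun s : ℝ => I s x)
        ((c : ℂ) / ((r : ℂ) - Complex.I * a * x) ^ 2) r := by
      have he : (0 * ((r:ℂ) - Complex.I * a * x) - (-(c:ℂ)) * 1)
          / ((r : ℂ) - Complex.I * a * x) ^ 2
          = (c : ℂ) / ((r : ℂ) - Complex.I * a * x) ^ 2 := by ring
      rw [← he]
      refine HasDerivAt.congr_of_eventuallyEq h2 ?_
      filter_upwards with s
      rw [hI, hp]; rfl
    exact h3.deriv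
  -- derivative in x
  have hdx : deriv (fun s => I r s) x
      = (c : ℂ) * (-(Complex.I * a)) / ((r : ℂ) - Complex.I * a * x) ^ 2 := by
    have h1 : HasDerivAt (fun s : ℝ => ((r : ℂ) - Complex.I * a * s))
        (-(Complex.I * a)) x := by
      have := ((Complex.ofRealCLM.hasDerivAt (x := x)).const_mul
        (Complex.I * (a : ℂ))).const_sub (r : ℂ)
      simpa using this
    have h2 := HasDerivAt.div (hasDerivAt_const x (-(c:ℂ))) h1 (by exact hPne)
    have h3 : HasDerivAt (fun s : ℝ => I r s)
        ((c : ℂ) * (-(Complex.I * a)) / ((r : ℂ) - Complex.I * a * x) ^ 2) x := by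
      have he : (0 * ((r:ℂ) - Complex.I * a * x) - (-(c:ℂ)) * (-(Complex.I * a)))
          / ((r : ℂ) - Complex.I * a * x) ^ 2
          = (c : ℂ) * (-(Complex.I * a)) / ((r : ℂ) - Complex.I * a * x) ^ 2 := by ring
      rw [← he]
      refine HasDerivAt.congr_of_eventuallyEq h2 ?_
      filter_upwards with s
      rw [hI, hp]; rfl
    exact h3.deriv
  have hQne : ((r : ℂ) + Complex.I * a * x) ≠ 0 := by
    intro h
    apply hPne
    have h1 := congrArg (starRingEnd ℂ) h
    simpa [map_add, map_mul, Complex.conj_I, Complex.conj_ofReal, sub_eq_add_neg,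
      neg_mul] using h1
  have hconj : (starRingEnd ℂ) (I r x) = -(c : ℂ) / ((r : ℂ) + Complex.I * a * x) := by
    rw [hI, hp]
    simp [map_div₀, map_sub, map_mul, Complex.conj_I, Complex.conj_ofReal]
  have hSigC : ((r : ℂ) ^ 2 + (a : ℂ) ^ 2 * (x : ℂ) ^ 2) ≠ 0 := by
    intro h
    apply hSig
    have : ((r^2 + a^2*x^2 : ℝ) : ℂ) = 0 := by push_cast; exact h
    exact_mod_cast this
  have hcne : (c : ℂ) ≠ 0 := by exact_mod_cast hc0.ne'
  rw [kerrPairing, hdr, hdx, hconj, hI r x, hp r x, hcexp]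
  push_cast
  rw [← hc3C]
  obtain ⟨P, hPd⟩ : ∃ P : ℂ, (r : ℂ) - Complex.I * a * x = P := ⟨_, rfl⟩
  obtain ⟨Q, hQd⟩ : ∃ Q : ℂ, (r : ℂ) + Complex.I * a * x = Q := ⟨_, rfl⟩
  rw [hPd] at hPne
  rw [hQd] at hQne
  have hPQ : P * Q = (r : ℂ) ^ 2 + (a : ℂ) ^ 2 * (x : ℂ) ^ 2 := by
    rw [← hPd, ← hQd]
    linear_combination (-((a:ℂ)^2 * (x:ℂ)^2)) * Complex.I_sq
  have hsum : P + Q = 2 * (r : ℂ) := by rw [← hPd, ← hQd]; ring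
  have hIa : ((c:ℂ) * -(Complex.I * a) / P ^ 2) * ((c:ℂ) * -(Complex.I * a) / P ^ 2)
      = -((c:ℂ) ^ 2 * (a:ℂ) ^ 2) / (P ^ 2 * P ^ 2) := by
    rw [div_mul_div_comm]
    congr 1
    linear_combination (c:ℂ) ^ 2 * (a:ℂ) ^ 2 * Complex.I_sq
  rw [hPd, hQd, ← hPQ]
  rw [show -((-(c:ℂ) / P) ^ 4)⁻¹ * (((r:ℂ) ^ 2 - 2 * ((c:ℂ)^3) * (r:ℂ) + (a:ℂ) ^ 2) / (P * Q) * ((c:ℂ) / P ^ 2) * ((c:ℂ) / P ^ 2)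
        + (1 - (x:ℂ) ^ 2) / (P * Q) * ((c:ℂ) * -(Complex.I * (a:ℂ)) / P ^ 2) * ((c:ℂ) * -(Complex.I * (a:ℂ)) / P ^ 2))
      = -((-(c:ℂ) / P) ^ 4)⁻¹ * (((r:ℂ) ^ 2 - 2 * ((c:ℂ)^3) * (r:ℂ) + (a:ℂ) ^ 2) / (P * Q) * ((c:ℂ) / P ^ 2) * ((c:ℂ) / P ^ 2)
        + (1 - (x:ℂ) ^ 2) / (P * Q) * (-((c:ℂ) ^ 2 * (a:ℂ) ^ 2) / (P ^ 2 * P ^ 2))) from by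
    rw [mul_assoc ((1 - (x:ℂ) ^ 2) / (P * Q)), hIa]]
  have h4 : ((-(c:ℂ) / P) ^ 4)⁻¹ = P ^ 4 / (c:ℂ) ^ 4 := by
    rw [div_pow, show (-(c:ℂ)) ^ 4 = (c:ℂ) ^ 4 by ring, inv_div]
  rw [h4]
  have key : -(P ^ 4 / (c:ℂ) ^ 4) * (((r:ℂ) ^ 2 - 2 * ((c:ℂ)^3) * (r:ℂ) + (a:ℂ) ^ 2) / (P * Q) * ((c:ℂ) / P ^ 2) * ((c:ℂ) / P ^ 2)
        + (1 - (x:ℂ) ^ 2) / (P * Q) * (-((c:ℂ) ^ 2 * (a:ℂ) ^ 2) / (P ^ 2 * P ^ 2)))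
      = -((c:ℂ)^2)⁻¹ + 2 * (c:ℂ) * (r:ℂ) / (P * Q) := by
    have hPQne : P * Q ≠ 0 := mul_ne_zero hPne hQne
    field_simp
    linear_combination hPQ
  rw [key]
  have last : -(c:ℂ) / P + -(c:ℂ) / Q = -(2 * (c:ℂ) * (r:ℂ) / (P * Q)) := by
    rw [div_add_div _ _ hPne hQne]
    rw [show -(c:ℂ) * Q + P * -(c:ℂ) = -(c:ℂ) * (P + Q) by ring, hsum]
    rw [show -(c:ℂ) * (2 * (r:ℂ)) = -(2 * (c:ℂ) * (r:ℂ)) by ring, neg_div]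
  rw [add_assoc, last]
  ring
end

section
/- With the setup of the previous statement (M > 0, p = r - iax, Σ = r² + a²x² ≠ 0, p ≠ 0, pairing ⟨f,g⟩ = (Δ_r/Σ)(∂_r f)(∂_r g) + ((1-x²)/Σ)(∂_x f)(∂_x g), 𝓘 = -M^{1/3}/p, 𝕄 = -𝓘^{-4}⟨𝓘,𝓘⟩ + 𝓘 + conj(𝓘) = -M^{-2/3}), the second curvature invariant 𝔸 := -|𝓘|^{-4}·⟨𝓘/conj(𝓘), conj(𝓘)/𝓘⟩ - 2·Im(1/𝓘²)·Im(2𝓘 - 𝕄) is constant: 𝔸 = -4a²M^{-4/3} at every point where p ≠ 0 and Σ ≠ 0. -/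
open Complex

set_option maxHeartbeats 2000000 in
/-- For `M > 0`, `p = r - iax`, `𝓘 = -M^{1/3}/p`,
`𝕄 = -𝓘⁻⁴⟨𝓘,𝓘⟩ + 𝓘 + conj 𝓘`, the second curvature invariant
`𝔸 = -|𝓘|⁻⁴⟨𝓘/conj 𝓘, conj 𝓘/𝓘⟩ - 2·Im(1/𝓘²)·Im(2𝓘 - 𝕄)`
is the constant `-4a²M^{-4/3}` wherever `p ≠ 0` and `Σ ≠ 0`. -/
theorem stmt_4 (a M r x : ℝ) (hM : 0 < M) (p I : ℝ → ℝ → ℂ)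
    (hp : ∀ r x : ℝ, p r x = (r : ℂ) - Complex.I * a * x)
    (hI : ∀ r x : ℝ, I r x = -((M ^ ((1 : ℝ) / 3) : ℝ) : ℂ) / p r x)
    (hSig : r ^ 2 + a ^ 2 * x ^ 2 ≠ 0) (hpne : p r x ≠ 0)
    (Mv : ℂ)
    (hMv : Mv = -((I r x) ^ 4)⁻¹ * kerrPairing a M I I r x
        + I r x + (starRingEnd ℂ) (I r x)) :
    -((‖I r x‖ ^ 4 : ℝ)⁻¹ : ℂ) *
        kerrPairing a M (fun r x => I r x / (starRingEnd ℂ) (I r x))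
          (fun r x => (starRingEnd ℂ) (I r x) / I r x) r x
      - ((2 * ((((I r x) ^ 2)⁻¹).im) * ((2 * I r x - Mv).im) : ℝ) : ℂ)
      = ((-4 * a ^ 2 * M ^ (-(4 : ℝ) / 3) : ℝ) : ℂ) := by
  have hc0 : (0:ℝ) < M ^ ((1:ℝ)/3) := Real.rpow_pos_of_pos hM _
  generalize hcdef : M ^ ((1:ℝ)/3) = c at *
  have hcne : c ≠ 0 := hc0.ne'
  have hcneC : (c:ℂ) ≠ 0 := by exact_mod_cast hcne
  have hc3 : c ^ 3 = M := by
    rw [← hcdef, ← Real.rpow_natCast (M ^ ((1:ℝ)/3)) 3, ← Real.rpow_mul hM.le]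
    norm_num
  have hM43 : M ^ (-(4:ℝ)/3) = (c^4)⁻¹ := by
    have h4 : c ^ 4 = M ^ ((4:ℝ)/3) := by
      rw [← hcdef, ← Real.rpow_natCast (M ^ ((1:ℝ)/3)) 4, ← Real.rpow_mul hM.le]
      norm_num
    rw [h4, ← Real.rpow_neg hM.le]
    norm_num
  have hconjPQ : ∀ s t : ℝ, (starRingEnd ℂ) ((s:ℂ) - Complex.I*a*t) = (s:ℂ) + Complex.I*a*t := by
    intro s t; simp [map_sub, map_mul, Complex.conj_I, Complex.conj_ofReal]
  have hconjQP : ∀ s t : ℝ, (starRingEnd ℂ) ((s:ℂ) + Complex.I*a*t) = (s:ℂ) - Complex.I*a*t := by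
    intro s t; simp [map_add, map_mul, Complex.conj_I, Complex.conj_ofReal]; ring
  have hPne : ((r:ℂ) - Complex.I*a*x) ≠ 0 := by rw [← hp]; exact hpne
  have hQne : ((r:ℂ) + Complex.I*a*x) ≠ 0 := fun h0 => hPne (by rw [← hconjQP r x, h0, map_zero])
  have hSigC : ((r^2+a^2*x^2:ℝ):ℂ) ≠ 0 := by exact_mod_cast hSig
  have hPQ : ((r:ℂ) - Complex.I*a*x) * ((r:ℂ) + Complex.I*a*x) = ((r^2 + a^2*x^2 : ℝ) : ℂ) := by
    push_cast; ring_nf; simp [Complex.I_sq]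
  -- derivative building blocks
  have dP : HasDerivAt (fun s : ℝ => (s:ℂ) - Complex.I*a*x) 1 r :=
    ((hasDerivAt_id r).ofReal_comp).sub_const _
  have dQ : HasDerivAt (fun s : ℝ => (s:ℂ) + Complex.I*a*x) 1 r :=
    ((hasDerivAt_id r).ofReal_comp).add_const _
  have dPx : HasDerivAt (fun s : ℝ => (r:ℂ) - Complex.I*a*s) (-(Complex.I*a)) x := by
    simpa using (((hasDerivAt_id x).ofReal_comp).const_mul (Complex.I*(a:ℂ))).const_sub (r:ℂ)
  have dQx : HasDerivAt (fun s : ℝ => (r:ℂ) + Complex.I*a*s) (Complex.I*a) x := by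
    simpa using (((hasDerivAt_id x).ofReal_comp).const_mul (Complex.I*(a:ℂ))).const_add (r:ℂ)
  -- quotient function identities
  have hdiv1 : ∀ s t : ℝ, I s t / (starRingEnd ℂ) (I s t)
      = ((s:ℂ) + Complex.I*a*t)/((s:ℂ) - Complex.I*a*t) := by
    intro s t
    rw [hI s t, hp, map_div₀, map_neg, Complex.conj_ofReal, hconjPQ]
    by_cases h : ((s:ℂ) - Complex.I*a*t) = 0
    · have h2 : ((s:ℂ) + Complex.I*a*t) = 0 := by rw [← hconjPQ, h]; simp
      simp [h, h2]
    · have h2 : ((s:ℂ) + Complex.I*a*t) ≠ 0 := fun h0 => h (by rw [← hconjQP s t, h0, map_zero])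
      field_simp
  have hdiv2 : ∀ s t : ℝ, (starRingEnd ℂ) (I s t) / I s t
      = ((s:ℂ) - Complex.I*a*t)/((s:ℂ) + Complex.I*a*t) := by
    intro s t
    rw [hI s t, hp, map_div₀, map_neg, Complex.conj_ofReal, hconjPQ]
    by_cases h : ((s:ℂ) - Complex.I*a*t) = 0
    · have h2 : ((s:ℂ) + Complex.I*a*t) = 0 := by rw [← hconjPQ, h]; simp
      simp [h, h2]
    · have h2 : ((s:ℂ) + Complex.I*a*t) ≠ 0 := fun h0 => h (by rw [← hconjQP s t, h0, map_zero])
      field_simp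
  -- the four derivatives of f and g
  have d1 : deriv (fun s : ℝ => I s x / (starRingEnd ℂ) (I s x)) r
      = (-(2*Complex.I*a*x))/((r:ℂ) - Complex.I*a*x)^2 := by
    have e : (fun s : ℝ => I s x / (starRingEnd ℂ) (I s x))
        = fun s : ℝ => ((s:ℂ) + Complex.I*a*x)/((s:ℂ) - Complex.I*a*x) :=
      funext fun s => hdiv1 s x
    have hd := (dQ.div dP hPne).deriv; simp only [Pi.div_def] at hd
    rw [e, hd]; ring
  have d2 : deriv (fun s : ℝ => (starRingEnd ℂ) (I s x) / I s x) r
      = (2*Complex.I*a*x)/((r:ℂ) + Complex.I*a*x)^2 := by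
    have e : (fun s : ℝ => (starRingEnd ℂ) (I s x) / I s x)
        = fun s : ℝ => ((s:ℂ) - Complex.I*a*x)/((s:ℂ) + Complex.I*a*x) :=
      funext fun s => hdiv2 s x
    have hd := (dP.div dQ hQne).deriv; simp only [Pi.div_def] at hd
    rw [e, hd]; ring
  have d3 : deriv (fun s : ℝ => I r s / (starRingEnd ℂ) (I r s)) x
      = (2*Complex.I*a*r)/((r:ℂ) - Complex.I*a*x)^2 := by
    have e : (fun s : ℝ => I r s / (starRingEnd ℂ) (I r s))
        = fun s : ℝ => ((r:ℂ) + Complex.I*a*s)/((r:ℂ) - Complex.I*a*s) :=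
      funext fun s => hdiv1 r s
    have hd := (dQx.div dPx hPne).deriv; simp only [Pi.div_def] at hd
    rw [e, hd]; ring
  have d4 : deriv (fun s : ℝ => (starRingEnd ℂ) (I r s) / I r s) x
      = (-(2*Complex.I*a*r))/((r:ℂ) + Complex.I*a*x)^2 := by
    have e : (fun s : ℝ => (starRingEnd ℂ) (I r s) / I r s)
        = fun s : ℝ => ((r:ℂ) - Complex.I*a*s)/((r:ℂ) + Complex.I*a*s) :=
      funext fun s => hdiv2 r s
    have hd := (dPx.div dQx hQne).deriv; simp only [Pi.div_def] at hd
    rw [e, hd]; ring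
  -- derivatives of I
  have dI1 : deriv (fun s : ℝ => I s x) r = (c:ℂ)/((r:ℂ) - Complex.I*a*x)^2 := by
    have e : (fun s : ℝ => I s x) = fun s : ℝ => -(c:ℂ)/((s:ℂ) - Complex.I*a*x) :=
      funext fun s => by rw [hI, hp]
    have hd := ((hasDerivAt_const r (-(c:ℂ))).div dP hPne).deriv; simp only [Pi.div_def] at hd
    rw [e, hd]; ring
  have dI2 : deriv (fun s : ℝ => I r s) x = (-(Complex.I*a*c))/((r:ℂ) - Complex.I*a*x)^2 := by
    have e : (fun s : ℝ => I r s) = fun s : ℝ => -(c:ℂ)/((r:ℂ) - Complex.I*a*s) :=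
      funext fun s => by rw [hI, hp]
    have hd := ((hasDerivAt_const x (-(c:ℂ))).div dPx hPne).deriv; simp only [Pi.div_def] at hd
    rw [e, hd]; ring
  have hSigC2 : ((r:ℂ)^2 + (a:ℂ)^2*(x:ℂ)^2) ≠ 0 := by
    intro h0; apply hSigC; push_cast; exact h0
  -- small complex product identities
  have e1 : (-(2*Complex.I*a*x))*(2*Complex.I*a*x) = ((4*a^2*x^2:ℝ):ℂ) := by
    push_cast; ring_nf; simp [Complex.I_sq]
  have e2 : (2*Complex.I*a*r)*(-(2*Complex.I*a*r)) = ((4*a^2*r^2:ℝ):ℂ) := by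
    push_cast; ring_nf; simp [Complex.I_sq]
  have e3 : (c:ℂ)*(c:ℂ) = ((c^2:ℝ):ℂ) := by push_cast; ring
  have e4 : (-(Complex.I*a*c))*(-(Complex.I*a*c)) = ((-(a^2*c^2):ℝ):ℂ) := by
    push_cast; ring_nf; simp [Complex.I_sq]
  have step : ∀ w u v : ℂ, w * (u/((r:ℂ)-Complex.I*a*x)^2) * (v/((r:ℂ)+Complex.I*a*x)^2)
      = w * ((u*v) / (((r^2+a^2*x^2):ℝ):ℂ)^2) := by
    intro w u v
    rw [mul_assoc, div_mul_div_comm, ← mul_pow, hPQ]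
  have step2 : ∀ w u v : ℂ, w * (u/((r:ℂ)-Complex.I*a*x)^2) * (v/((r:ℂ)-Complex.I*a*x)^2)
      = w * ((u*v) / ((r:ℂ)-Complex.I*a*x)^4) := by
    intro w u v
    rw [mul_assoc, div_mul_div_comm, ← pow_add]
  -- the pairing of f and g
  have A1 : kerrPairing a M (fun r x => I r x / (starRingEnd ℂ) (I r x))
          (fun r x => (starRingEnd ℂ) (I r x) / I r x) r x
      = (((r^2-2*M*r+a^2)/(r^2+a^2*x^2):ℝ):ℂ)
          * (((4*a^2*x^2:ℝ):ℂ)/(((r^2+a^2*x^2):ℝ):ℂ)^2)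
        + (((1-x^2)/(r^2+a^2*x^2):ℝ):ℂ)
          * (((4*a^2*r^2:ℝ):ℂ)/(((r^2+a^2*x^2):ℝ):ℂ)^2) := by
    simp only [kerrPairing]
    rw [d1, d2, d3, d4, step, step, e1, e2]
  -- |I|^4
  have habs2 : ‖I r x‖^2 = c^2/(r^2+a^2*x^2) := by
    rw [hI, hp, Complex.sq_norm, map_div₀]
    simp [Complex.normSq_apply]
    ring
  have habs4 : ‖I r x‖^4 = c^4/(r^2+a^2*x^2)^2 := by
    have h44 : ‖I r x‖^4 = (‖I r x‖^2)^2 := by ring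
    rw [h44, habs2, div_pow]
    ring_nf
  -- Im of (I^2)⁻¹
  have hinv : ((I r x)^2)⁻¹ = ((r:ℂ)-Complex.I*a*x)^2/((c^2:ℝ):ℂ) := by
    rw [hI, hp, div_pow, inv_div]
    congr 1
    push_cast
    ring
  have A3 : (((I r x)^2)⁻¹).im = -(2*a*r*x)/c^2 := by
    rw [hinv, pow_two]
    simp only [Complex.div_im, Complex.mul_im, Complex.mul_re, Complex.sub_re, Complex.sub_im,
      Complex.I_re, Complex.I_im, Complex.ofReal_re, Complex.ofReal_im, Complex.normSq_apply,
      mul_zero, zero_mul, mul_one, one_mul, add_zero, zero_add, sub_zero, zero_sub]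
    field_simp
    ring
  -- the value of Mv
  have KII : kerrPairing a M I I r x
      = (((r^2-2*M*r+a^2)/(r^2+a^2*x^2):ℝ):ℂ) * (((c^2:ℝ):ℂ)/((r:ℂ)-Complex.I*a*x)^4)
        + (((1-x^2)/(r^2+a^2*x^2):ℝ):ℂ) * (((-(a^2*c^2):ℝ):ℂ)/((r:ℂ)-Complex.I*a*x)^4) := by
    simp only [kerrPairing]
    rw [dI1, dI2, step2, step2, e3, e4]
  have hI4 : ((I r x)^4)⁻¹ = ((r:ℂ)-Complex.I*a*x)^4/(((c^4:ℝ)):ℂ) := by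
    rw [hI, hp, div_pow, inv_div]
    congr 1
    push_cast
    ring
  have hconjI : (starRingEnd ℂ) (I r x) = -(c:ℂ)/((r:ℂ)+Complex.I*a*x) := by
    rw [hI, hp, map_div₀, map_neg, Complex.conj_ofReal, hconjPQ]
  have hc4ne : ((c^4:ℝ):ℂ) ≠ 0 := by
    intro h0; apply hcne; exact_mod_cast pow_eq_zero_iff (by norm_num : (4:ℕ) ≠ 0) |>.mp (by exact_mod_cast h0)
  have gen : ∀ w1 w2 u1 u2 d e : ℂ, d ≠ 0 → e ≠ 0 →
      -(d/e) * (w1*(u1/d) + w2*(u2/d)) = -((w1*u1 + w2*u2)/e) := by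
    intro w1 w2 u1 u2 d e hd he
    field_simp
  have red : -(((r:ℂ)-Complex.I*a*x)^4/(((c^4:ℝ)):ℂ))
        * ((((r^2-2*M*r+a^2)/(r^2+a^2*x^2):ℝ):ℂ) * (((c^2:ℝ):ℂ)/((r:ℂ)-Complex.I*a*x)^4)
          + (((1-x^2)/(r^2+a^2*x^2):ℝ):ℂ) * (((-(a^2*c^2):ℝ):ℂ)/((r:ℂ)-Complex.I*a*x)^4))
      = -(((((r^2-2*M*r+a^2)/(r^2+a^2*x^2):ℝ):ℂ) * ((c^2:ℝ):ℂ)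
          + (((1-x^2)/(r^2+a^2*x^2):ℝ):ℂ) * (((-(a^2*c^2)):ℝ):ℂ))/(((c^4:ℝ)):ℂ)) :=
    gen _ _ _ _ _ _ (pow_ne_zero 4 hPne) hc4ne
  have red2 : -(c:ℂ)/((r:ℂ)-Complex.I*a*x) + -(c:ℂ)/((r:ℂ)+Complex.I*a*x)
      = ((-(2*c*r)/(r^2+a^2*x^2):ℝ):ℂ) := by
    rw [div_add_div _ _ hPne hQne, hPQ]
    push_cast
    congr 1
    ring
  have hMvval : Mv = ((-(1:ℝ)/c^2 : ℝ):ℂ) := by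
    rw [hMv, KII, hI4, red, hconjI, hI r x, hp, add_assoc, red2]
    push_cast
    rw [← hc3]
    push_cast
    field_simp
    ring
  -- rectangular form of I
  have hIval : I r x = ((-(c*r)/(r^2+a^2*x^2):ℝ):ℂ) + ((-(c*a*x)/(r^2+a^2*x^2):ℝ):ℂ)*Complex.I := by
    rw [hI, hp, div_eq_iff hPne]
    simp only [Complex.ext_iff, Complex.add_re, Complex.add_im, Complex.mul_re, Complex.mul_im,
      Complex.sub_re, Complex.sub_im, Complex.neg_re, Complex.neg_im,
      Complex.ofReal_re, Complex.ofReal_im, Complex.I_re, Complex.I_im,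
      mul_zero, zero_mul, mul_one, one_mul, add_zero, zero_add, sub_zero, zero_sub]
    constructor <;> (field_simp; ring)
  have A4 : (2*I r x - Mv).im = -(2*c*a*x)/(r^2+a^2*x^2) := by
    rw [hMvval, hIval]
    simp only [Complex.sub_im, Complex.add_im, Complex.mul_im, Complex.mul_re,
      Complex.ofReal_im, Complex.ofReal_re, Complex.I_im, Complex.I_re,
      Complex.re_ofNat, Complex.im_ofNat,
      mul_zero, zero_mul, mul_one, one_mul, add_zero, zero_add, sub_zero, zero_sub]
    ring
  -- final assembly
  rw [habs4, A1, A3, A4, hM43, ← hc3]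
  have key : -(c^4/(r^2+a^2*x^2)^2)⁻¹
        * ((r^2-2*c^3*r+a^2)/(r^2+a^2*x^2) * (4*a^2*x^2/(r^2+a^2*x^2)^2)
          + (1-x^2)/(r^2+a^2*x^2) * (4*a^2*r^2/(r^2+a^2*x^2)^2))
      - 2*(-(2*a*r*x)/c^2)*(-(2*c*a*x)/(r^2+a^2*x^2))
      = -4*a^2*(c^4)⁻¹ := by
    field_simp
    ring
  exact_mod_cast key
end
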